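/- Let p be a real form of degree 2d in n variables, and for each exponent ℓ of total degree 2d write a(p;ℓ) = (ℓ₁!⋯ℓₙ!/(2d)!)·coeff(p,ℓ). Let M_p be the symmetric matrix indexed by the exponents i of total degree d, with entries (M_p)_{i,j} = a(p; i+j). Then p lies in the dual cone (Σ_{n,2d}^k)*, i.e. [p, h²] ≥ 0 for every real form h of degree d with at most k monomials, if and only if every k×k principal submatrix of M_p (obtained by choosing any k exponents of total degree d) is positive semidefinite. -/

import Mathlib

open MvPolynomial Finset

/-- The Fischer inner product of two `n`-ary forms of degree `2d`. -/
noncomputable def fischer (n d : ℕ) (p q : MvPolynomial (Fin n) ℝ) : ℝ :=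
  ∑ i ∈ p.support ∪ q.support,
    (((∏ j, Nat.factorial (i j) : ℕ) : ℝ) / ((2 * d).factorial : ℝ)) *
      coeff i p * coeff i q

/-- The normalized coefficient `a(p;ℓ) = (ℓ₁!⋯ℓₙ!/(2d)!)·coeff(p,ℓ)` of a degree `2d` form. -/
noncomputable def acoef (n d : ℕ) (p : MvPolynomial (Fin n) ℝ) (ℓ : Fin n →₀ ℕ) : ℝ :=
  (((∏ j, Nat.factorial (ℓ j) : ℕ) : ℝ) / ((2 * d).factorial : ℝ)) * coeff ℓ p

lemma acoef_eq_zero {n d : ℕ} {p : MvPolynomial (Fin n) ℝ} {ℓ : Fin n →₀ ℕ}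
    (h : ℓ ∉ p.support) : acoef n d p ℓ = 0 := by
  simp [acoef, notMem_support_iff.mp h]

lemma fischer_eq_sum_support (n d : ℕ) (p q : MvPolynomial (Fin n) ℝ) :
    fischer n d p q = ∑ i ∈ p.support, acoef n d p i * coeff i q := by
  simp only [fischer, acoef]
  exact (Finset.sum_subset Finset.subset_union_left fun i _ hi => by
    simp [notMem_support_iff.mp hi]).symm

lemma fischer_indexed (n d : ℕ) (p : MvPolynomial (Fin n) ℝ) {ι : Type*} (s : Finset ι)
    (ε : ι → (Fin n →₀ ℕ)) (x : ι → ℝ) :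
    fischer n d p ((∑ a ∈ s, monomial (ε a) (x a)) ^ 2) =
      ∑ a ∈ s, ∑ b ∈ s, acoef n d p (ε a + ε b) * (x a * x b) := by
  classical
  have hq : (∑ a ∈ s, monomial (ε a) (x a)) ^ 2 =
      ∑ a ∈ s, ∑ b ∈ s, monomial (ε a + ε b) (x a * x b) := by
    rw [sq, Finset.sum_mul_sum]
    simp_rw [monomial_mul]
  rw [fischer_eq_sum_support, hq]
  simp_rw [coeff_sum, coeff_monomial, Finset.mul_sum, mul_ite, mul_zero]
  rw [Finset.sum_comm]
  refine Finset.sum_congr rfl fun a _ => ?_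
  rw [Finset.sum_comm]
  refine Finset.sum_congr rfl fun b _ => ?_
  rw [Finset.sum_ite_eq]
  split_ifs with hmem
  · rfl
  · rw [acoef_eq_zero hmem, zero_mul]

lemma deg_of_mem_support {n d : ℕ} {h : MvPolynomial (Fin n) ℝ} (hh : h.IsHomogeneous d)
    {i : Fin n →₀ ℕ} (hi : i ∈ h.support) : ∑ j, i j = d := by
  have := hh (mem_support_iff.mp hi)
  rw [← this, Finsupp.weight_apply, Finsupp.sum_fintype] <;> simp

lemma isHomogeneous_monomial_of_deg {n d : ℕ} {i : Fin n →₀ ℕ} (hd : ∑ j, i j = d) (r : ℝ) :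
    (monomial i r).IsHomogeneous d := by
  apply isHomogeneous_monomial
  rw [← hd, Finsupp.degree_eq_weight_one, Finsupp.weight_apply, Finsupp.sum_fintype] <;> simp

lemma dot_eq {k : ℕ} (M : Matrix (Fin k) (Fin k) ℝ) (x : Fin k → ℝ) :
    dotProduct (star x) (M.mulVec x) = ∑ a, ∑ b, M a b * (x a * x b) := by
  simp only [dotProduct, Matrix.mulVec, Pi.star_apply, star_trivial, Finset.mul_sum]
  exact Finset.sum_congr rfl fun a _ => Finset.sum_congr rfl fun b _ => by ring

theorem dual_cone_iff_principal_submatrices_psd (n d k : ℕ)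
    (p : MvPolynomial (Fin n) ℝ) (hp : p.IsHomogeneous (2 * d)) :
    (∀ h : MvPolynomial (Fin n) ℝ, h.IsHomogeneous d → h.support.card ≤ k →
        0 ≤ fischer n d p (h ^ 2)) ↔
    (∀ e : Fin k → (Fin n →₀ ℕ), (∀ a, ∑ j, e a j = d) →
        (Matrix.of fun a b : Fin k => acoef n d p (e a + e b)).PosSemidef) := by
  classical
  constructor
  · intro H e he
    apply Matrix.PosSemidef.of_dotProduct_mulVec_nonneg
    · ext a b
      simp only [Matrix.conjTranspose_apply, Matrix.of_apply, star_trivial]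
      rw [add_comm]
    · intro x
      set h : MvPolynomial (Fin n) ℝ := ∑ a : Fin k, monomial (e a) (x a) with hh
      have hhom : h.IsHomogeneous d :=
        IsHomogeneous.sum _ _ _ fun a _ => isHomogeneous_monomial_of_deg (he a) _
      have hsub : h.support ⊆ Finset.image e univ := by
        refine MvPolynomial.support_sum.trans ?_
        intro i hi
        rw [Finset.mem_biUnion] at hi
        obtain ⟨a, -, hia⟩ := hi
        have : i ∈ ({e a} : Finset _) := support_monomial_subset hia
        rw [Finset.mem_singleton] at this
        subst this
        exact Finset.mem_image_of_mem e (mem_univ a)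
      have hcard : h.support.card ≤ k :=
        (Finset.card_le_card hsub).trans (Finset.card_image_le.trans (by simp))
      have h0 := H h hhom hcard
      rw [hh, fischer_indexed] at h0
      rw [dot_eq]
      simpa using h0
  · intro H h hhom hcard
    rcases eq_or_ne h 0 with rfl | hne
    · simp [fischer]
    · obtain ⟨s0, hs0⟩ : h.support.Nonempty := support_nonempty.mpr hne
      set m := h.support.card with hm
      have hmk : m ≤ k := hcard
      set g : Fin m → (Fin n →₀ ℕ) := fun u => (h.support.equivFin.symm u : _) with hg
      have hgmem : ∀ u, g u ∈ h.support := fun u => (h.support.equivFin.symm u).2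
      have hginj : Function.Injective g := fun u v huv =>
        h.support.equivFin.symm.injective (Subtype.coe_injective huv)
      set e : Fin k → (Fin n →₀ ℕ) :=
        fun a => if ha : (a : ℕ) < m then g ⟨a, ha⟩ else s0 with he
      set x : Fin k → ℝ :=
        fun a => if ha : (a : ℕ) < m then coeff (g ⟨a, ha⟩) h else 0 with hx
      have hA : ∀ a, ∑ j, e a j = d := by
        intro a
        by_cases ha : (a : ℕ) < m
        · rw [he]; simp only [dif_pos ha]; exact deg_of_mem_support hhom (hgmem _)
        · rw [he]; simp only [dif_neg ha]; exact deg_of_mem_support hhom hs0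
      have hrep : h = ∑ a : Fin k, monomial (e a) (x a) := by
        conv_lhs => rw [h.as_sum]
        have hres : ∑ a : Fin k, monomial (e a) (x a) =
            ∑ a ∈ univ.filter (fun a : Fin k => (a : ℕ) < m), monomial (e a) (x a) := by
          refine (Finset.sum_subset (Finset.filter_subset _ _) fun a _ ha => ?_).symm
          have ham : ¬ ((a : ℕ) < m) := by simpa using ha
          rw [hx]; simp [dif_neg ham]
        rw [hres]
        symm
        refine Finset.sum_bij (fun a ha => g ⟨(a : ℕ), (Finset.mem_filter.mp ha).2⟩)
          (fun a ha => hgmem _) ?_ ?_ ?_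
        · intro a1 ha1 a2 ha2 hgeq
          have h2 := hginj hgeq
          rw [Fin.mk.injEq] at h2
          exact Fin.val_injective h2
        · intro v hv
          set u : Fin m := h.support.equivFin ⟨v, hv⟩ with hu
          have hum : (u : ℕ) < m := u.2
          refine ⟨⟨(u : ℕ), lt_of_lt_of_le hum hmk⟩, Finset.mem_filter.mpr ⟨mem_univ _, hum⟩, ?_⟩
          have h4 : ∀ hw : (u : ℕ) < m, g ⟨(u : ℕ), hw⟩ = v := by
            intro hw
            have h5 : (⟨(u : ℕ), hw⟩ : Fin m) = u := Fin.ext rfl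
            rw [h5, hg, hu]
            simp
          exact h4 _
        · intro a ha
          have ham : (a : ℕ) < m := (Finset.mem_filter.mp ha).2
          rw [he, hx]
          simp [dif_pos ham]
      rw [hrep, fischer_indexed]
      have hPSD := (H e hA).dotProduct_mulVec_nonneg x
      rw [dot_eq] at hPSD
      simpa using hPSD
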